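/- Let G be a finite simple block graph and let P_1,…,P_ℓ be vertex-disjoint induced paths of G. If P_ind contains an internal strand as a subgraph, then P_ind contains an internal strand that is edge-disjoint from P̲ = P_1 ∪ … ∪ P_ℓ. -/

import Mathlib

open SimpleGraph

/-- An induced path in a simple graph `G`: a walk which is a path and such that the
subgraph of `G` induced on its vertex set equals the path. -/
structure InducedPath {V : Type*} (G : SimpleGraph V) where
  first : V
  last : V
  walk : G.Walk first last
  isPath : walk.IsPath
  induced : ∀ x ∈ walk.support, ∀ y ∈ walk.support, G.Adj x y → s(x, y) ∈ walk.edges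

namespace InducedPath

variable {V : Type*} {G : SimpleGraph V}

/-- The vertex set of an induced path. -/
def vertexSet (P : InducedPath G) : Set V := {v | v ∈ P.walk.support}

/-- The edge set of an induced path. -/
def edgeSet (P : InducedPath G) : Set (Sym2 V) := {e | e ∈ P.walk.edges}

/-- The terminal vertices `∂P` of an induced path. -/
def boundary (P : InducedPath G) : Set V := {P.first, P.last}

/-- The internal vertices `P°` of an induced path. -/
def interior (P : InducedPath G) : Set V := P.vertexSet \ P.boundary

end InducedPath

section FamilyDefs

variable {V : Type*} (G : SimpleGraph V) {ℓ : ℕ}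

/-- `Q` contains `P` as a subgraph. -/
def PathContains (Q P : InducedPath G) : Prop :=
  P.vertexSet ⊆ Q.vertexSet ∧ P.edgeSet ⊆ Q.edgeSet

/-- The vertex set of `P_ind`, the induced subgraph on `⋃ i, V(P i)`. -/
def famVerts (P : Fin ℓ → InducedPath G) : Set V := ⋃ i, (P i).vertexSet

/-- The union of the edge sets of the paths `P i`. -/
def famEdges (P : Fin ℓ → InducedPath G) : Set (Sym2 V) := ⋃ i, (P i).edgeSet

/-- The paths `P i` are pairwise vertex-disjoint. -/
def PairwiseVertexDisjoint (P : Fin ℓ → InducedPath G) : Prop :=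
  ∀ i j : Fin ℓ, i ≠ j → Disjoint (P i).vertexSet (P j).vertexSet

/-- `φ` is an orientation of the induced path `P`, i.e. a surjection `{1,2} → ∂P`. -/
def IsOrientation (P : InducedPath G) (φ : Fin 2 → V) : Prop :=
  Set.range φ = P.boundary

/-- `Q` is an induced path of `P_ind` (equivalently, an induced path of `G` all of whose
vertices belong to `⋃ i, V(P i)`). -/
def IsPathOfInd (P : Fin ℓ → InducedPath G) (Q : InducedPath G) : Prop :=
  Q.vertexSet ⊆ famVerts G P

/-- The data `(P, σ, φ)` is DOIP. -/
def IsDOIPData (P : Fin ℓ → InducedPath G) (σ : Equiv.Perm (Fin ℓ))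
    (φ : Fin ℓ → Fin 2 → V) : Prop :=
  (∀ i, IsOrientation G (P i) (φ i)) ∧
    ∀ i j : Fin ℓ, σ i ≤ σ j → ∀ Q : InducedPath G, IsPathOfInd G P Q →
      ({Q.first, Q.last} : Set V) = {φ (σ i) 0, φ (σ j) 1} →
      ∃ k, PathContains G Q (P k)

/-- The family `P` is DOIP: there exist `σ` and orientations making it DOIP. -/
def FamilyDOIP (P : Fin ℓ → InducedPath G) : Prop :=
  ∃ (σ : Equiv.Perm (Fin ℓ)) (φ : Fin ℓ → Fin 2 → V), IsDOIPData G P σ φ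

/-- `Q` realizes an arc `(i,j)` of the directed multigraph `K_{P_ind}`. -/
def KArcWitness (P : Fin ℓ → InducedPath G) (φ : Fin ℓ → Fin 2 → V) (i j : Fin ℓ)
    (Q : InducedPath G) : Prop :=
  IsPathOfInd G P Q ∧ ({Q.first, Q.last} : Set V) = {φ i 0, φ j 1} ∧
    ∀ k, ¬ PathContains G Q (P k)

/-- `(i,j)` is an arc of `K_{P_ind}`. -/
def KArc (P : Fin ℓ → InducedPath G) (φ : Fin ℓ → Fin 2 → V) (i j : Fin ℓ) : Prop :=
  ∃ Q : InducedPath G, KArcWitness G P φ i j Q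

/-- The directed multigraph `K_{P_ind}` is directed acyclic (no loops and no directed
cycles). -/
def KAcyclic (P : Fin ℓ → InducedPath G) (φ : Fin ℓ → Fin 2 → V) : Prop :=
  ∀ i : Fin ℓ, ¬ Relation.TransGen (KArc G P φ) i i

/-- `Q` is a strand of `P_ind` from `P i` to `P j`. -/
def IsStrand (P : Fin ℓ → InducedPath G) (φ : Fin ℓ → Fin 2 → V) (i j : Fin ℓ)
    (Q : InducedPath G) : Prop :=
  i ≠ j ∧ IsPathOfInd G P Q ∧ Q.first ≠ φ i 1 ∧ Q.last ≠ φ j 0 ∧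
    Q.vertexSet ∩ (P i).vertexSet = {Q.first} ∧
    Q.vertexSet ∩ (P j).vertexSet = {Q.last} ∧
    ∀ k, ¬ PathContains G Q (P k)

/-- `Q` is an internal strand of `P_ind` from `P i` to `P j`. -/
def IsInternalStrand (P : Fin ℓ → InducedPath G) (i j : Fin ℓ) (Q : InducedPath G) : Prop :=
  i ≠ j ∧ IsPathOfInd G P Q ∧
    Q.first ∈ (P i).interior ∧ Q.last ∈ (P j).interior ∧
    Q.vertexSet ∩ (P i).vertexSet = {Q.first} ∧
    Q.vertexSet ∩ (P j).vertexSet = {Q.last} ∧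
    ∀ k, ¬ PathContains G Q (P k)

/-- `(Q, b, c)` is an internal fork of `P_ind` from `P i` to `P j`. -/
def IsInternalFork (P : Fin ℓ → InducedPath G) (i j : Fin ℓ) (Q : InducedPath G)
    (b c : V) : Prop :=
  i ≠ j ∧ IsPathOfInd G P Q ∧ Q.first ∈ (P i).interior ∧
    Q.vertexSet ∩ (P i).vertexSet = {Q.first} ∧
    Q.vertexSet ∩ (P j).vertexSet = ∅ ∧
    b ∈ (P j).vertexSet ∧ c ∈ (P j).vertexSet ∧ b ≠ c ∧
    G.Adj Q.last b ∧ G.Adj Q.last c ∧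
    ∀ k, ¬ PathContains G Q (P k)

/-- `(Q, a, b, c, d)` is a double fork of `P_ind` from `P i` to `P j`. -/
def IsDoubleFork (P : Fin ℓ → InducedPath G) (i j : Fin ℓ) (Q : InducedPath G)
    (a b c d : V) : Prop :=
  i ≠ j ∧ IsPathOfInd G P Q ∧
    Q.vertexSet ∩ (P i).vertexSet = ∅ ∧
    Q.vertexSet ∩ (P j).vertexSet = ∅ ∧
    a ∈ (P i).vertexSet ∧ b ∈ (P i).vertexSet ∧ a ≠ b ∧
    c ∈ (P j).vertexSet ∧ d ∈ (P j).vertexSet ∧ c ≠ d ∧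
    G.Adj Q.first a ∧ G.Adj Q.first b ∧ G.Adj Q.last c ∧ G.Adj Q.last d ∧
    ∀ k, ¬ PathContains G Q (P k)

/-- `(a, b, c, d)` is a complete ladder of `P_ind` between `P i` and `P j`. -/
def IsCompleteLadder (P : Fin ℓ → InducedPath G) (i j : Fin ℓ) (a b c d : V) : Prop :=
  i ≠ j ∧ a ∈ (P i).vertexSet ∧ b ∈ (P i).vertexSet ∧ a ≠ b ∧
    c ∈ (P j).vertexSet ∧ d ∈ (P j).vertexSet ∧ c ≠ d ∧
    G.Adj a b ∧ G.Adj a c ∧ G.Adj a d ∧ G.Adj b c ∧ G.Adj b d ∧ G.Adj c d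

/-- `P_ind` contains an internal strand, an internal fork, a double fork, or a
complete ladder. -/
def HasForbidden (P : Fin ℓ → InducedPath G) : Prop :=
  (∃ i j Q, IsInternalStrand G P i j Q) ∨
  (∃ i j Q b c, IsInternalFork G P i j Q b c) ∨
  (∃ i j Q a b c d, IsDoubleFork G P i j Q a b c d) ∨
  (∃ i j a b c d, IsCompleteLadder G P i j a b c d)

/-- `P_ind` contains a complete ladder, or an internal strand, internal fork, or double
fork which is edge-disjoint from the family `P`. -/
def HasForbiddenEdgeDisjoint (P : Fin ℓ → InducedPath G) : Prop :=
  (∃ i j Q, IsInternalStrand G P i j Q ∧ Disjoint Q.edgeSet (famEdges G P)) ∨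
  (∃ i j Q b c, IsInternalFork G P i j Q b c ∧
    Disjoint (Q.edgeSet ∪ {s(Q.last, b), s(Q.last, c)}) (famEdges G P)) ∨
  (∃ i j Q a b c d, IsDoubleFork G P i j Q a b c d ∧
    Disjoint (Q.edgeSet ∪ {s(Q.first, a), s(Q.first, b), s(Q.last, c), s(Q.last, d)})
      (famEdges G P)) ∨
  (∃ i j a b c d, IsCompleteLadder G P i j a b c d)

end FamilyDefs

section Invariants

variable {V : Type*}

/-- The invariant `ν(G)`: the maximal total number of edges of a family of
vertex-disjoint induced paths of `G` which is DOIP. -/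
noncomputable def nu (G : SimpleGraph V) : ℕ :=
  sSup {n : ℕ | ∃ (ℓ : ℕ) (P : Fin ℓ → InducedPath G),
    PairwiseVertexDisjoint G P ∧ FamilyDOIP G P ∧ n = ∑ i, (P i).walk.length}

/-- `ℓ(G)`: the number of edges of a longest induced path of `G`. -/
noncomputable def longestInducedPathLength (G : SimpleGraph V) : ℕ :=
  sSup {n : ℕ | ∃ P : InducedPath G, n = P.walk.length}

end Invariants

section BlockGraphs

variable {V : Type*} {G : SimpleGraph V}

/-- A subgraph is biconnected if it is connected and remains connected after
deleting any single vertex. -/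
def SubgraphBiconnected (H : G.Subgraph) : Prop :=
  H.coe.Connected ∧ ∀ v : V, ((H.deleteVerts {v}).coe).Connected

/-- A block of `G` is a maximal biconnected subgraph. -/
def IsBlock (H : G.Subgraph) : Prop :=
  SubgraphBiconnected H ∧ ∀ H' : G.Subgraph, SubgraphBiconnected H' → H ≤ H' → H' = H

/-- `G` is a block graph if every block of `G` is a complete graph. -/
def IsBlockGraph (G : SimpleGraph V) : Prop :=
  ∀ H : G.Subgraph, IsBlock H → ∀ a ∈ H.verts, ∀ b ∈ H.verts, a ≠ b → H.Adj a b

/-- The intersection `Q ∩ R` of two induced paths, as a subgraph of `G`. -/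
def pathsInter (Q R : InducedPath G) : G.Subgraph where
  verts := Q.vertexSet ∩ R.vertexSet
  Adj a b := G.Adj a b ∧ s(a, b) ∈ Q.walk.edges ∧ s(a, b) ∈ R.walk.edges
  adj_sub h := h.1
  edge_vert h := ⟨Q.walk.fst_mem_support_of_mem_edges h.2.1,
    R.walk.fst_mem_support_of_mem_edges h.2.2⟩
  symm := by
    constructor
    intro a b h
    refine ⟨h.1.symm, ?_, ?_⟩
    · rw [Sym2.eq_swap]; exact h.2.1
    · rw [Sym2.eq_swap]; exact h.2.2

/-- `s` is a maximal clique of `G`. -/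
def IsMaxClique (G : SimpleGraph V) (s : Set V) : Prop :=
  G.IsClique s ∧ ∀ t : Set V, G.IsClique t → s ⊆ t → s = t

/-- `G` has the two-block property: every vertex belongs to at most two maximal
cliques. -/
def TwoBlockProperty (G : SimpleGraph V) : Prop :=
  ∀ v : V, ({s : Set V | IsMaxClique G s ∧ v ∈ s}).ncard ≤ 2

/-- The completion `G_c` of `G` at the vertex `c`. -/
def completionAt (G : SimpleGraph V) (c : V) : SimpleGraph V where
  Adj u w := G.Adj u w ∨ (u ≠ w ∧ G.Adj c u ∧ G.Adj c w)
  symm := by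
    constructor
    intro u w h
    rcases h with h | ⟨hne, h1, h2⟩
    · exact Or.inl h.symm
    · exact Or.inr ⟨hne.symm, h2, h1⟩
  loopless := by
    constructor
    intro u h
    rcases h with h | ⟨hne, _, _⟩
    · exact G.ne_of_adj h rfl
    · exact hne rfl

/-- The number of connected components of a graph. -/
noncomputable def numComponents (G : SimpleGraph V) : ℕ :=
  Nat.card G.ConnectedComponent

/-- `c` is a cut vertex of `G`: deleting it strictly increases the number of
connected components. -/
def IsCutVertex (G : SimpleGraph V) (c : V) : Prop :=
  numComponents G < numComponents (G.induce ({c}ᶜ : Set V))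

end BlockGraphs

section AuxWalk
variable {V : Type*} {G : SimpleGraph V}

/-- induced property of a walk -/
def WalkInd (G : SimpleGraph V) {a b : V} (w : G.Walk a b) : Prop :=
  ∀ x ∈ w.support, ∀ y ∈ w.support, G.Adj x y → s(x, y) ∈ w.edges

lemma aux_mem_inter_of_append {a c b : V} {A : G.Walk a c} {B : G.Walk c b}
    (h : (A.append B).IsPath) {x : V} (hxA : x ∈ A.support) (hxB : x ∈ B.support) : x = c := by
  have hs := h.support_nodup
  rw [Walk.support_append] at hs
  rcases List.nodup_append'.mp hs with ⟨-, -, hdis⟩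
  rw [B.support_eq_cons, List.mem_cons] at hxB
  rcases hxB with rfl | hxB
  · rfl
  · exact absurd hxB (hdis hxA)

lemma walkInd_append_left {a c b : V} {A : G.Walk a c} {B : G.Walk c b}
    (hp : (A.append B).IsPath) (hi : WalkInd G (A.append B)) : WalkInd G A := by
  intro x hx y hy hadj
  have hh := hi x (by rw [Walk.mem_support_append_iff]; exact Or.inl hx)
    y (by rw [Walk.mem_support_append_iff]; exact Or.inl hy) hadj
  rw [Walk.edges_append, List.mem_append] at hh
  rcases hh with h' | h'
  · exact h'
  · exfalso
    have hx' : x = c := aux_mem_inter_of_append hp hx (B.fst_mem_support_of_mem_edges h')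
    have hy' : y = c := aux_mem_inter_of_append hp hy (B.snd_mem_support_of_mem_edges h')
    exact hadj.ne (hx'.trans hy'.symm)

lemma walkInd_append_right {a c b : V} {A : G.Walk a c} {B : G.Walk c b}
    (hp : (A.append B).IsPath) (hi : WalkInd G (A.append B)) : WalkInd G B := by
  intro x hx y hy hadj
  have hh := hi x (by rw [Walk.mem_support_append_iff]; exact Or.inr hx)
    y (by rw [Walk.mem_support_append_iff]; exact Or.inr hy) hadj
  rw [Walk.edges_append, List.mem_append] at hh
  rcases hh with h' | h'
  · exfalso
    have hx' : x = c := aux_mem_inter_of_append hp (A.fst_mem_support_of_mem_edges h') hx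
    have hy' : y = c := aux_mem_inter_of_append hp (A.snd_mem_support_of_mem_edges h') hy
    exact hadj.ne (hx'.trans hy'.symm)
  · exact h'

lemma walkInd_reverse {a b : V} {p : G.Walk a b} (h : WalkInd G p) : WalkInd G p.reverse := by
  intro x hx y hy hadj
  rw [Walk.support_reverse, List.mem_reverse] at hx hy
  rw [Walk.edges_reverse, List.mem_reverse]
  exact h x hx y hy hadj

lemma walkInd_copy {a b a' b' : V} {p : G.Walk a b} (h1 : a = a') (h2 : b = b')
    (h : WalkInd G p) : WalkInd G (p.copy h1 h2) := by
  subst h1; subst h2; exact h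

lemma aux_exists_firstHit (S : Set V) :
    ∀ {a b : V} (w : G.Walk a b), (∃ x ∈ w.support, x ∈ S) →
    ∃ (c : V) (w₁ : G.Walk a c) (w₂ : G.Walk c b), w₁.append w₂ = w ∧ c ∈ S ∧
      ∀ x ∈ w₁.support, x ∈ S → x = c := by
  intro a b w
  induction w with
  | nil =>
    rintro ⟨x, hx, hxS⟩
    rw [Walk.support_nil, List.mem_singleton] at hx
    subst hx
    exact ⟨_, Walk.nil, Walk.nil, rfl, hxS, by simp⟩
  | @cons a a' b h w ih =>
    rintro ⟨x, hx, hxS⟩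
    by_cases haS : a ∈ S
    · refine ⟨a, Walk.nil, Walk.cons h w, rfl, haS, ?_⟩
      intro z hz _
      rw [Walk.support_nil, List.mem_singleton] at hz
      exact hz
    · rw [Walk.support_cons, List.mem_cons] at hx
      rcases hx with rfl | hx
      · exact absurd hxS haS
      obtain ⟨c, w₁, w₂, heq, hcS, hfirst⟩ := ih ⟨x, hx, hxS⟩
      refine ⟨c, Walk.cons h w₁, w₂, by rw [Walk.cons_append, heq], hcS, ?_⟩
      intro z hz hzS
      rw [Walk.support_cons, List.mem_cons] at hz
      rcases hz with rfl | hz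
      · exact absurd hzS haS
      · exact hfirst z hz hzS

lemma aux_eq_snd_of_mem_edges {a s b x : V} (h : G.Adj a s) (q : G.Walk s b)
    (hp : (Walk.cons h q).IsPath) (hx : s(a, x) ∈ (Walk.cons h q).edges) : x = s := by
  rw [Walk.edges_cons, List.mem_cons] at hx
  rcases hx with hx | hx
  · rcases Sym2.eq_iff.mp hx with ⟨-, h2⟩ | ⟨h1, h2⟩
    · exact h2
    · exact absurd h1 h.ne
  · exact absurd (q.fst_mem_support_of_mem_edges hx) ((Walk.cons_isPath_iff h q).mp hp).2

lemma aux_path_loop_nil {u : V} (p : G.Walk u u) (hp : p.IsPath) : p.length = 0 := by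
  cases p with
  | nil => rfl
  | cons h q => exact absurd q.end_mem_support ((Walk.cons_isPath_iff h q).mp hp).2

lemma aux_list_two_splits {α : Type*} {L d₁ d₂ c₁ c₂ : List α} (hnd : L.Nodup)
    (h1 : L = d₁ ++ d₂) (h2 : L = c₁ ++ c₂) {u z : α}
    (hu1 : u ∈ d₁) (hu2 : u ∈ c₂) (hz1 : z ∈ d₂) (hz2 : z ∈ c₁) : False := by
  have hp1 : d₁ <+: L := h1 ▸ List.prefix_append d₁ d₂
  have hp2 : c₁ <+: L := h2 ▸ List.prefix_append c₁ c₂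
  rcases List.prefix_or_prefix_of_prefix hp1 hp2 with hp | hp
  · exact (List.nodup_append'.mp (h2 ▸ hnd)).2.2 (hp.subset hu1) hu2
  · exact (List.nodup_append'.mp (h1 ▸ hnd)).2.2 (hp.subset hz2) hz1

end AuxWalk
section AuxBlock
variable {V : Type*} {G : SimpleGraph V}

lemma SimpleGraph.Subgraph.Connected.sup {H K : G.Subgraph} (hH : H.Connected)
    (hK : K.Connected) (hn : (H ⊓ K).verts.Nonempty) : (H ⊔ K).Connected :=
  Subgraph.connected_sup hH.preconnected hK.preconnected hn

instance auxFiniteSubgraph [Finite V] : Finite (G.Subgraph) :=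
  Finite.of_injective (fun H => (H.verts, H.Adj)) (by
    intro H K h
    rw [Prod.ext_iff] at h
    exact SimpleGraph.Subgraph.ext h.1 h.2)

lemma aux_deleteVerts_eq_self {H : G.Subgraph} {w : V} (hw : w ∉ H.verts) :
    H.deleteVerts {w} = H := by
  refine SimpleGraph.Subgraph.ext ?_ ?_
  · rw [Subgraph.deleteVerts_verts]
    apply Set.diff_singleton_eq_self hw
  · ext x y
    rw [Subgraph.deleteVerts_adj]
    constructor
    · exact fun h => h.2.2.2.2
    · intro h
      refine ⟨H.edge_vert h, ?_, H.edge_vert h.symm, ?_, h⟩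
      · simp only [Set.mem_singleton_iff]
        rintro rfl; exact hw (H.edge_vert h)
      · simp only [Set.mem_singleton_iff]
        rintro rfl; exact hw (H.edge_vert h.symm)

lemma aux_connected_spanning {H K : G.Subgraph} (hle : H ≤ K) (hv : H.verts = K.verts)
    (hc : H.Connected) : K.coe.Connected :=
  Subgraph.connected_iff'.mp (hc.mono hle hv)

/-- removing the start vertex of two internally disjoint paths keeps things connected -/
lemma aux_del_first {u m : V} (p q : G.Walk u m) (hum : u ≠ m) (hp : p.IsPath) (hq : q.IsPath) :
    (((p.toSubgraph ⊔ q.toSubgraph).deleteVerts {u}).coe).Connected := by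
  obtain ⟨r, hur, p', rfl⟩ := Walk.exists_eq_cons_of_ne hum p
  obtain ⟨s, hus, q', rfl⟩ := Walk.exists_eq_cons_of_ne hum q
  have hp' := (Walk.cons_isPath_iff hur p').mp hp
  have hq' := (Walk.cons_isPath_iff hus q').mp hq
  have hK : (p'.toSubgraph ⊔ q'.toSubgraph).Connected :=
    Subgraph.Connected.sup p'.toSubgraph_connected q'.toSubgraph_connected
      ⟨m, p'.end_mem_verts_toSubgraph, q'.end_mem_verts_toSubgraph⟩
  apply aux_connected_spanning (H := p'.toSubgraph ⊔ q'.toSubgraph) ?_ ?_ hK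
  · constructor
    · intro x hx
      rcases hx with hx | hx
      · rw [Walk.mem_verts_toSubgraph] at hx
        refine ⟨Or.inl ?_, ?_⟩
        · rw [Walk.mem_verts_toSubgraph, Walk.support_cons]; exact List.mem_cons_of_mem _ hx
        · simp only [Set.mem_singleton_iff]; rintro rfl; exact hp'.2 hx
      · rw [Walk.mem_verts_toSubgraph] at hx
        refine ⟨Or.inr ?_, ?_⟩
        · rw [Walk.mem_verts_toSubgraph, Walk.support_cons]; exact List.mem_cons_of_mem _ hx
        · simp only [Set.mem_singleton_iff]; rintro rfl; exact hq'.2 hx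
    · intro x y hxy
      rw [Subgraph.deleteVerts_adj]
      rcases hxy with hxy | hxy
      · have hx := p'.toSubgraph.edge_vert hxy
        have hy := p'.toSubgraph.edge_vert hxy.symm
        rw [Walk.mem_verts_toSubgraph] at hx hy
        refine ⟨Or.inl ?_, ?_, Or.inl ?_, ?_, Or.inl ?_⟩
        · rw [Walk.mem_verts_toSubgraph, Walk.support_cons]; exact List.mem_cons_of_mem _ hx
        · simp only [Set.mem_singleton_iff]; rintro rfl; exact hp'.2 hx
        · rw [Walk.mem_verts_toSubgraph, Walk.support_cons]; exact List.mem_cons_of_mem _ hy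
        · simp only [Set.mem_singleton_iff]; rintro rfl; exact hp'.2 hy
        · rw [Walk.toSubgraph, Subgraph.sup_adj]; exact Or.inr hxy
      · have hx := q'.toSubgraph.edge_vert hxy
        have hy := q'.toSubgraph.edge_vert hxy.symm
        rw [Walk.mem_verts_toSubgraph] at hx hy
        refine ⟨Or.inr ?_, ?_, Or.inr ?_, ?_, Or.inr ?_⟩
        · rw [Walk.mem_verts_toSubgraph, Walk.support_cons]; exact List.mem_cons_of_mem _ hx
        · simp only [Set.mem_singleton_iff]; rintro rfl; exact hq'.2 hx
        · rw [Walk.mem_verts_toSubgraph, Walk.support_cons]; exact List.mem_cons_of_mem _ hy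
        · simp only [Set.mem_singleton_iff]; rintro rfl; exact hq'.2 hy
        · rw [Walk.toSubgraph, Subgraph.sup_adj]; exact Or.inr hxy
  · rw [Subgraph.deleteVerts_verts]
    ext x
    simp only [Subgraph.verts_sup, Walk.mem_verts_toSubgraph, Set.mem_union, Set.mem_setOf_eq,
      Set.mem_diff, Set.mem_singleton_iff, Walk.support_cons, List.mem_cons]
    constructor
    · rintro (hx | hx)
      · exact ⟨Or.inl (Or.inr hx), fun h => hp'.2 (h ▸ hx)⟩
      · exact ⟨Or.inr (Or.inr hx), fun h => hq'.2 (h ▸ hx)⟩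
    · rintro ⟨(rfl | hx) | (rfl | hx), hne⟩
      · exact absurd rfl hne
      · exact Or.inl hx
      · exact absurd rfl hne
      · exact Or.inr hx

end AuxBlock
section AuxBlock2
variable {V : Type*} {G : SimpleGraph V}

lemma aux_verts_sup_mem {p q : G.Walk u m} {x : V} :
    x ∈ (p.toSubgraph ⊔ q.toSubgraph).verts ↔ x ∈ p.support ∨ x ∈ q.support := by
  simp [Subgraph.verts_sup, Walk.mem_verts_toSubgraph]

/-- removing an interior vertex of `p` -/
lemma aux_del_interior [DecidableEq V] {u m v : V} (p q : G.Walk u m)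
    (hp : p.IsPath) (hq : q.IsPath)
    (hvp : v ∈ p.support) (hvu : v ≠ u) (hvm : v ≠ m) (hvq : v ∉ q.support) :
    (((p.toSubgraph ⊔ q.toSubgraph).deleteVerts {v}).coe).Connected := by
  have hspec := p.take_spec hvp
  have hA : (p.takeUntil v hvp).IsPath := hp.takeUntil hvp
  have hB : (p.dropUntil v hvp).IsPath := hp.dropUntil hvp
  obtain ⟨z, hvz, b, hb⟩ := Walk.exists_eq_cons_of_ne hvm (p.dropUntil v hvp)
  obtain ⟨y, hvy, ar, har⟩ := Walk.exists_eq_cons_of_ne hvu (p.takeUntil v hvp).reverse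
  -- basic facts
  have hbpath : b.IsPath := by
    have := hB; rw [hb] at this; exact ((Walk.cons_isPath_iff hvz b).mp this).1
  have hvb : v ∉ b.support := by
    have := hB; rw [hb] at this; exact ((Walk.cons_isPath_iff hvz b).mp this).2
  have hapath : ar.IsPath := by
    have := hA.reverse; rw [har] at this; exact ((Walk.cons_isPath_iff hvy ar).mp this).1
  have hva : v ∉ ar.support := by
    have := hA.reverse; rw [har] at this; exact ((Walk.cons_isPath_iff hvy ar).mp this).2
  have haP : ∀ x ∈ ar.support, x ∈ p.support := by
    intro x hx
    have h1 : x ∈ (p.takeUntil v hvp).reverse.support := by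
      rw [har, Walk.support_cons]; exact List.mem_cons_of_mem _ hx
    rw [Walk.support_reverse, List.mem_reverse] at h1
    exact Walk.support_takeUntil_subset p hvp h1
  have hbP : ∀ x ∈ b.support, x ∈ p.support := by
    intro x hx
    have h1 : x ∈ (p.dropUntil v hvp).support := by
      rw [hb, Walk.support_cons]; exact List.mem_cons_of_mem _ hx
    exact Walk.support_dropUntil_subset p hvp h1
  -- the spanning connected subgraph
  have hK : ((q.toSubgraph ⊔ ar.toSubgraph) ⊔ b.toSubgraph).Connected := by
    refine Subgraph.Connected.sup ?_ b.toSubgraph_connected ⟨m, ?_, ?_⟩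
    · exact Subgraph.Connected.sup q.toSubgraph_connected ar.toSubgraph_connected
        ⟨u, q.start_mem_verts_toSubgraph, ar.end_mem_verts_toSubgraph⟩
    · exact Or.inl q.end_mem_verts_toSubgraph
    · exact b.end_mem_verts_toSubgraph
  -- toSubgraph inclusions
  have hale : ar.toSubgraph ≤ p.toSubgraph := by
    calc ar.toSubgraph ≤ (p.takeUntil v hvp).reverse.toSubgraph := by
          rw [har, Walk.toSubgraph]; exact le_sup_right
    _ = (p.takeUntil v hvp).toSubgraph := Walk.toSubgraph_reverse _
    _ ≤ p.toSubgraph := by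
          conv_rhs => rw [← hspec]
          rw [Walk.toSubgraph_append]; exact le_sup_left
  have hble : b.toSubgraph ≤ p.toSubgraph := by
    calc b.toSubgraph ≤ (p.dropUntil v hvp).toSubgraph := by
          rw [hb, Walk.toSubgraph]; exact le_sup_right
    _ ≤ p.toSubgraph := by
          conv_rhs => rw [← hspec]
          rw [Walk.toSubgraph_append]; exact le_sup_right
  apply aux_connected_spanning (H := (q.toSubgraph ⊔ ar.toSubgraph) ⊔ b.toSubgraph) ?_ ?_ hK
  · constructor
    · rintro x ((hx | hx) | hx)
      · refine ⟨Or.inr hx, ?_⟩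
        simp only [Set.mem_singleton_iff]
        rintro rfl
        exact hvq ((Walk.mem_verts_toSubgraph q).mp hx)
      · rw [Walk.mem_verts_toSubgraph] at hx
        refine ⟨Or.inl ((Walk.mem_verts_toSubgraph p).mpr (haP x hx)), ?_⟩
        simp only [Set.mem_singleton_iff]; rintro rfl; exact hva hx
      · rw [Walk.mem_verts_toSubgraph] at hx
        refine ⟨Or.inl ((Walk.mem_verts_toSubgraph p).mpr (hbP x hx)), ?_⟩
        simp only [Set.mem_singleton_iff]; rintro rfl; exact hvb hx
    · rintro x y ((hxy | hxy) | hxy) <;> rw [Subgraph.deleteVerts_adj]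
      · have hx := q.toSubgraph.edge_vert hxy
        have hy := q.toSubgraph.edge_vert hxy.symm
        rw [Walk.mem_verts_toSubgraph] at hx hy
        refine ⟨Or.inr ((Walk.mem_verts_toSubgraph q).mpr hx), ?_,
          Or.inr ((Walk.mem_verts_toSubgraph q).mpr hy), ?_, Or.inr hxy⟩ <;>
          simp only [Set.mem_singleton_iff]
        · rintro rfl; exact hvq hx
        · rintro rfl; exact hvq hy
      · have hx := ar.toSubgraph.edge_vert hxy
        have hy := ar.toSubgraph.edge_vert hxy.symm
        rw [Walk.mem_verts_toSubgraph] at hx hy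
        refine ⟨Or.inl ((Walk.mem_verts_toSubgraph p).mpr (haP x hx)), ?_,
          Or.inl ((Walk.mem_verts_toSubgraph p).mpr (haP y hy)), ?_, Or.inl (hale.2 hxy)⟩ <;>
          simp only [Set.mem_singleton_iff]
        · rintro rfl; exact hva hx
        · rintro rfl; exact hva hy
      · have hx := b.toSubgraph.edge_vert hxy
        have hy := b.toSubgraph.edge_vert hxy.symm
        rw [Walk.mem_verts_toSubgraph] at hx hy
        refine ⟨Or.inl ((Walk.mem_verts_toSubgraph p).mpr (hbP x hx)), ?_,
          Or.inl ((Walk.mem_verts_toSubgraph p).mpr (hbP y hy)), ?_, Or.inl (hble.2 hxy)⟩ <;>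
          simp only [Set.mem_singleton_iff]
        · rintro rfl; exact hvb hx
        · rintro rfl; exact hvb hy
  · rw [Subgraph.deleteVerts_verts]
    ext x
    simp only [Subgraph.verts_sup, Walk.mem_verts_toSubgraph, Set.mem_union, Set.mem_setOf_eq,
      Set.mem_diff, Set.mem_singleton_iff]
    constructor
    · rintro ((hx | hx) | hx)
      · exact ⟨Or.inr hx, fun h => hvq (h ▸ hx)⟩
      · exact ⟨Or.inl (haP x hx), fun h => hva (h ▸ hx)⟩
      · exact ⟨Or.inl (hbP x hx), fun h => hvb (h ▸ hx)⟩
    · rintro ⟨hx | hx, hne⟩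
      · -- x ∈ p.support, x ≠ v : x ∈ ar.support ∨ x ∈ b.support
        rw [← hspec, Walk.mem_support_append_iff] at hx
        rcases hx with hx | hx
        · left; right
          have : x ∈ (p.takeUntil v hvp).reverse.support := by
            rw [Walk.support_reverse, List.mem_reverse]; exact hx
          rw [har, Walk.support_cons, List.mem_cons] at this
          rcases this with rfl | this
          · exact absurd rfl hne
          · exact this
        · right
          rw [hb, Walk.support_cons, List.mem_cons] at hx
          rcases hx with rfl | hx
          · exact absurd rfl hne
          · exact hx
      · exact Or.inl (Or.inl hx)

end AuxBlock2
section AuxBlock3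
variable {V : Type*} {G : SimpleGraph V}

lemma aux_biconnected_sup [DecidableEq V] {u m : V} (p q : G.Walk u m) (hum : u ≠ m)
    (hp : p.IsPath) (hq : q.IsPath)
    (hint : ∀ z, z ∈ p.support → z ∈ q.support → z = u ∨ z = m) :
    SubgraphBiconnected (p.toSubgraph ⊔ q.toSubgraph) := by
  constructor
  · exact Subgraph.connected_iff'.mp
      (Subgraph.Connected.sup p.toSubgraph_connected q.toSubgraph_connected
        ⟨u, p.start_mem_verts_toSubgraph, q.start_mem_verts_toSubgraph⟩)
  intro v
  by_cases hv : v ∈ (p.toSubgraph ⊔ q.toSubgraph).verts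
  · rcases aux_verts_sup_mem.mp hv with hvp | hvq
    · by_cases hvu : v = u
      · subst hvu; exact aux_del_first p q hum hp hq
      by_cases hvm : v = m
      · subst hvm
        have : p.reverse.toSubgraph ⊔ q.reverse.toSubgraph = p.toSubgraph ⊔ q.toSubgraph := by
          rw [Walk.toSubgraph_reverse, Walk.toSubgraph_reverse]
        rw [← this]
        exact aux_del_first p.reverse q.reverse (Ne.symm hum) hp.reverse hq.reverse
      · have hvq : v ∉ q.support := by
          intro hvq
          rcases hint v hvp hvq with h | h
          · exact hvu h
          · exact hvm h
        exact aux_del_interior p q hp hq hvp hvu hvm hvq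
    · by_cases hvu : v = u
      · subst hvu
        rw [sup_comm]
        exact aux_del_first q p hum hq hp
      by_cases hvm : v = m
      · subst hvm
        rw [sup_comm]
        have : q.reverse.toSubgraph ⊔ p.reverse.toSubgraph = q.toSubgraph ⊔ p.toSubgraph := by
          rw [Walk.toSubgraph_reverse, Walk.toSubgraph_reverse]
        rw [← this]
        exact aux_del_first q.reverse p.reverse (Ne.symm hum) hq.reverse hp.reverse
      · have hvp : v ∉ p.support := by
          intro hvp
          rcases hint v hvp hvq with h | h
          · exact hvu h
          · exact hvm h
        rw [sup_comm]
        exact aux_del_interior q p hq hp hvq hvu hvm hvp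
  · rw [aux_deleteVerts_eq_self hv]
    exact Subgraph.connected_iff'.mp
      (Subgraph.Connected.sup p.toSubgraph_connected q.toSubgraph_connected
        ⟨u, p.start_mem_verts_toSubgraph, q.start_mem_verts_toSubgraph⟩)

lemma aux_exists_block_above [Finite V] {H : G.Subgraph} (hH : SubgraphBiconnected H) :
    ∃ M : G.Subgraph, IsBlock M ∧ H ≤ M := by
  have hfin : ({K : G.Subgraph | SubgraphBiconnected K ∧ H ≤ K}).Finite := Set.toFinite _
  obtain ⟨M, hM, hmax⟩ := Set.Finite.exists_maximalFor id _ hfin ⟨H, hH, le_rfl⟩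
  refine ⟨M, ⟨hM.1, ?_⟩, hM.2⟩
  intro H' hH' hle
  exact le_antisymm (hmax ⟨hH', hM.2.trans hle⟩ hle) hle

lemma aux_adj_of_two_disjoint_paths [Finite V] [DecidableEq V] (hBG : IsBlockGraph G)
    {u m : V} (hum : u ≠ m) (p q : G.Walk u m) (hp : p.IsPath) (hq : q.IsPath)
    (hint : ∀ z, z ∈ p.support → z ∈ q.support → z = u ∨ z = m) : G.Adj u m := by
  obtain ⟨M, hM, hle⟩ := aux_exists_block_above (aux_biconnected_sup p q hum hp hq hint)
  have hu : u ∈ M.verts := hle.1 (aux_verts_sup_mem.mpr (Or.inl p.start_mem_support))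
  have hm : m ∈ M.verts := hle.1 (aux_verts_sup_mem.mpr (Or.inl p.end_mem_support))
  exact (hBG M hM u hu m hm hum).adj_sub

end AuxBlock3
section AuxUnique
variable {V : Type*} {G : SimpleGraph V}

lemma aux_unique_induced [Finite V] [DecidableEq V] (hBG : IsBlockGraph G) {v : V} :
    ∀ (n : ℕ) (u : V) (R : G.Walk u v), R.length = n → R.IsPath → WalkInd G R →
    ∀ S : G.Walk u v, S.IsPath → WalkInd G S → ∀ x ∈ S.support, x ∈ R.support := by
  intro n
  induction n with
  | zero =>
    intro u R hlen hR hRi S hS hSi x hx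
    cases R with
    | cons h R' => simp at hlen
    | nil =>
      cases S with
      | nil => exact hx
      | cons h S' =>
        exact absurd S'.end_mem_support ((Walk.cons_isPath_iff h S').mp hS).2
  | succ n IH =>
    intro u R hlen hR hRi S hS hSi
    have hune : u ≠ v := by
      rintro rfl
      rw [aux_path_loop_nil R hR] at hlen
      exact Nat.noConfusion hlen
    obtain ⟨r, hur, R', rfl⟩ := Walk.exists_eq_cons_of_ne hune R
    obtain ⟨s, hus, S', rfl⟩ := Walk.exists_eq_cons_of_ne hune S
    have hRcons := (Walk.cons_isPath_iff hur R').mp hR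
    have hScons := (Walk.cons_isPath_iff hus S').mp hS
    have hconsR : Walk.cons hur R' = (Walk.cons hur Walk.nil).append R' := by
      rw [Walk.cons_append, Walk.nil_append]
    have hconsS : Walk.cons hus S' = (Walk.cons hus Walk.nil).append S' := by
      rw [Walk.cons_append, Walk.nil_append]
    by_cases hrs : r = s
    · subst hrs
      have hRi' : WalkInd G R' := by
        rw [hconsR] at hR hRi; exact walkInd_append_right hR hRi
      have hSi' : WalkInd G S' := by
        rw [hconsS] at hS hSi; exact walkInd_append_right hS hSi
      intro x hx
      rw [Walk.support_cons, List.mem_cons] at hx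
      rcases hx with rfl | hx
      · exact Walk.start_mem_support _
      · rw [Walk.support_cons, List.mem_cons]
        right
        exact IH r R' (by simpa using hlen) hRcons.1 hRi' S' hScons.1 hSi' x hx
    · exfalso
      -- first hit of S' in R'.support
      obtain ⟨m, A, B, happ, hmR', hfirst⟩ :=
        aux_exists_firstHit {y | y ∈ R'.support} S' ⟨v, S'.end_mem_support, R'.end_mem_support⟩
      have hmR : m ∈ (Walk.cons hur R').support := by
        rw [Walk.support_cons, List.mem_cons]; exact Or.inr hmR'
      have hP₁ : ((Walk.cons hur R').takeUntil m hmR).IsPath := hR.takeUntil hmR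
      have hP₂ : (Walk.cons hus A).IsPath := by
        have h1 := hS
        rw [← happ, ← Walk.cons_append] at h1
        exact h1.of_append_left
      have hmu : m ≠ u := by
        rintro rfl; exact hRcons.2 hmR'
      have hAS' : ∀ x ∈ A.support, x ∈ S'.support := by
        intro x hx
        rw [← happ, Walk.mem_support_append_iff]; exact Or.inl hx
      have hint : ∀ z, z ∈ ((Walk.cons hur R').takeUntil m hmR).support →
          z ∈ (Walk.cons hus A).support → z = u ∨ z = m := by
        intro z hz1 hz2
        rw [Walk.support_cons, List.mem_cons] at hz2
        rcases hz2 with rfl | hz2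
        · exact Or.inl rfl
        · have hzR : z ∈ (Walk.cons hur R').support :=
            Walk.support_takeUntil_subset _ hmR hz1
          rw [Walk.support_cons, List.mem_cons] at hzR
          rcases hzR with rfl | hzR
          · exact absurd (hAS' z hz2) hScons.2
          · exact Or.inr (hfirst z hz2 hzR)
      have hadj : G.Adj u m :=
        aux_adj_of_two_disjoint_paths hBG (Ne.symm hmu) _ _ hP₁ hP₂ hint
      have hmS : m ∈ (Walk.cons hus S').support := by
        rw [Walk.support_cons, List.mem_cons]
        exact Or.inr (hAS' m A.end_mem_support)
      have h1 : s(u, m) ∈ (Walk.cons hus S').edges :=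
        hSi u (Walk.start_mem_support _) m hmS hadj
      have h2 : s(u, m) ∈ (Walk.cons hur R').edges :=
        hRi u (Walk.start_mem_support _) m hmR hadj
      have hms : m = s := aux_eq_snd_of_mem_edges hus S' hS h1
      have hmr : m = r := aux_eq_snd_of_mem_edges hur R' hR h2
      exact hrs (hmr ▸ hms ▸ rfl)

end AuxUnique
section AuxStrand
variable {V : Type*} {G : SimpleGraph V}

/-- reversal of an induced path -/
def InducedPath.rev (Q : InducedPath G) : InducedPath G where
  first := Q.last
  last := Q.first
  walk := Q.walk.reverse
  isPath := Q.isPath.reverse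
  induced := walkInd_reverse Q.induced

lemma rev_vertexSet (Q : InducedPath G) : Q.rev.vertexSet = Q.vertexSet := by
  ext x
  simp [InducedPath.vertexSet, InducedPath.rev, Walk.support_reverse]

lemma rev_edgeSet (Q : InducedPath G) : Q.rev.edgeSet = Q.edgeSet := by
  ext e
  simp [InducedPath.edgeSet, InducedPath.rev, Walk.edges_reverse]

lemma pathContains_rev_iff {Q R : InducedPath G} :
    PathContains G Q.rev R ↔ PathContains G Q R := by
  unfold PathContains
  rw [rev_vertexSet, rev_edgeSet]

variable {ℓ : ℕ} {P : Fin ℓ → InducedPath G}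

lemma IsInternalStrand.rev {i j : Fin ℓ} {Q : InducedPath G}
    (h : IsInternalStrand G P i j Q) : IsInternalStrand G P j i Q.rev := by
  obtain ⟨hij, hind, hf, hl, hfi, hlj, hnc⟩ := h
  refine ⟨hij.symm, ?_, hl, hf, ?_, ?_, fun k hk => hnc k (pathContains_rev_iff.mp hk)⟩
  · unfold IsPathOfInd at hind ⊢
    rw [rev_vertexSet]; exact hind
  · rw [rev_vertexSet]; exact hlj
  · rw [rev_vertexSet]; exact hfi

lemma aux_shorter_strand [DecidableEq V]
    (hdisj : PairwiseVertexDisjoint G P) {i j k : Fin ℓ} (Q : InducedPath G)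
    (hQ : IsInternalStrand G P i j Q) (hik : i ≠ k) (hkj : k ≠ j)
    {c : V} (w₁ : G.Walk Q.first c) (w₂ : G.Walk c Q.last)
    (happ : w₁.append w₂ = Q.walk) (hfirst : ∀ x ∈ w₁.support, x ∈ (P k).vertexSet → x = c)
    (hc : c ∈ (P k).interior) :
    ∃ Q' : InducedPath G, IsInternalStrand G P i k Q' ∧ Q'.walk.length < Q.walk.length := by
  obtain ⟨hij, hind, hfi, hlj, hQi, hQj, hnc⟩ := hQ
  have hQpath := Q.isPath
  have hQind : WalkInd G Q.walk := Q.induced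
  rw [← happ] at hQpath hQind
  have hpath : w₁.IsPath := hQpath.of_append_left
  have hw₁ind : WalkInd G w₁ := walkInd_append_left hQpath hQind
  have hsub : ∀ x ∈ w₁.support, x ∈ Q.walk.support := by
    intro x hx
    rw [← happ, Walk.mem_support_append_iff]; exact Or.inl hx
  set Q' : InducedPath G := ⟨Q.first, c, w₁, hpath, hw₁ind⟩ with hQ'
  refine ⟨Q', ⟨hik, ?_, hfi, hc, ?_, ?_, ?_⟩, ?_⟩
  · intro x hx
    exact hind (hsub x hx)
  · apply Set.eq_singleton_iff_unique_mem.mpr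
    constructor
    · refine ⟨w₁.start_mem_support, ?_⟩
      have : Q.first ∈ ({Q.first} : Set V) := rfl
      rw [← hQi] at this
      exact this.2
    · intro x hx
      have h1 : x ∈ Q.vertexSet ∩ (P i).vertexSet := ⟨hsub x hx.1, hx.2⟩
      rw [hQi, Set.mem_singleton_iff] at h1
      exact h1
  · apply Set.eq_singleton_iff_unique_mem.mpr
    exact ⟨⟨w₁.end_mem_support, hc.1⟩, fun x hx => hfirst x hx.1 hx.2⟩
  · intro k' hk'
    exact hnc k' ⟨fun x hx => hsub x (hk'.1 hx), fun e he => by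
      have : e ∈ Q.walk.edges := by
        rw [← happ, Walk.edges_append, List.mem_append]
        exact Or.inl (hk'.2 he)
      exact this⟩
  · have hlen : Q.walk.length = w₁.length + w₂.length := by
      rw [← happ, Walk.length_append]
    have hw₂ : w₂.length ≠ 0 := by
      intro h0
      have hcQ : c = Q.last := Walk.eq_of_length_eq_zero h0
      have h1 : Q.last ∈ (P j).vertexSet := hlj.1
      have h2 : Q.last ∈ (P k).vertexSet := hcQ ▸ hc.1
      exact Set.disjoint_left.mp (hdisj k j hkj) h2 h1
    have hQ'len : Q'.walk.length = w₁.length := rfl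
    omega

end AuxStrand
section AuxMain
variable {V : Type*} {G : SimpleGraph V}

lemma aux_key_strand [Finite V] [DecidableEq V] (hBG : IsBlockGraph G)
    {ℓ : ℕ} {P : Fin ℓ → InducedPath G} (hdisj : PairwiseVertexDisjoint G P) :
    ∀ (n : ℕ) (i j : Fin ℓ) (Q : InducedPath G), Q.walk.length = n →
      IsInternalStrand G P i j Q →
      ∃ i' j' Q', IsInternalStrand G P i' j' Q' ∧ Disjoint Q'.edgeSet (famEdges G P) := by
  intro n
  induction n using Nat.strong_induction_on with
  | _ n IH =>
  intro i j Q hlen hQ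
  classical
  by_cases hdis : Disjoint Q.edgeSet (famEdges G P)
  · exact ⟨i, j, Q, hQ, hdis⟩
  rw [Set.not_disjoint_iff] at hdis
  obtain ⟨e, heQ, hePf⟩ := hdis
  obtain ⟨k, hek⟩ : ∃ k, e ∈ (P k).edgeSet := by
    simpa only [famEdges, Set.mem_iUnion] using hePf
  clear hePf
  revert heQ hek
  induction e using Sym2.ind with | _ x y =>
  intro heQ hek
  have hQ2 := hQ
  obtain ⟨hij, hind, hfi, hlj, hQi, hQj, hnc⟩ := hQ2
  have hadjxy : G.Adj x y := Q.walk.adj_of_mem_edges heQ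
  have hxQ : x ∈ Q.walk.support := Q.walk.fst_mem_support_of_mem_edges heQ
  have hyQ : y ∈ Q.walk.support := Q.walk.snd_mem_support_of_mem_edges heQ
  have hxk : x ∈ (P k).vertexSet := (P k).walk.fst_mem_support_of_mem_edges hek
  have hyk : y ∈ (P k).vertexSet := (P k).walk.snd_mem_support_of_mem_edges hek
  have hxy : x ≠ y := hadjxy.ne
  have hki : k ≠ i := by
    rintro rfl
    have h1 : x ∈ Q.vertexSet ∩ (P k).vertexSet := ⟨hxQ, hxk⟩
    have h2 : y ∈ Q.vertexSet ∩ (P k).vertexSet := ⟨hyQ, hyk⟩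
    rw [hQi, Set.mem_singleton_iff] at h1 h2
    exact hxy (h1.trans h2.symm)
  have hkj : k ≠ j := by
    rintro rfl
    have h1 : x ∈ Q.vertexSet ∩ (P k).vertexSet := ⟨hxQ, hxk⟩
    have h2 : y ∈ Q.vertexSet ∩ (P k).vertexSet := ⟨hyQ, hyk⟩
    rw [hQj, Set.mem_singleton_iff] at h1 h2
    exact hxy (h1.trans h2.symm)
  -- forward first hit
  obtain ⟨u, w₁, w₂, happ, huk, hfirstu⟩ :=
    aux_exists_firstHit (P k).vertexSet Q.walk ⟨x, hxQ, hxk⟩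
  by_cases huint : u ∈ (P k).interior
  · obtain ⟨Q', hQ', hlt⟩ :=
      aux_shorter_strand hdisj Q hQ (Ne.symm hki) hkj w₁ w₂ happ hfirstu huint
    exact IH Q'.walk.length (hlen ▸ hlt) i k Q' rfl hQ'
  -- backward first hit
  have hQrev : IsInternalStrand G P j i Q.rev := hQ.rev
  have hxQr : x ∈ Q.rev.walk.support := by
    show x ∈ Q.walk.reverse.support
    rw [Walk.support_reverse, List.mem_reverse]; exact hxQ
  obtain ⟨v, a₁, a₂, happr, hvk, hfirstv⟩ :=
    aux_exists_firstHit (P k).vertexSet Q.rev.walk ⟨x, hxQr, hxk⟩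
  by_cases hvint : v ∈ (P k).interior
  · obtain ⟨Q', hQ', hlt⟩ :=
      aux_shorter_strand hdisj Q.rev hQrev (Ne.symm hkj) hki a₁ a₂ happr hfirstv hvint
    have hrl : Q.rev.walk.length = Q.walk.length := Walk.length_reverse _
    exact IH Q'.walk.length (by omega) j k Q' rfl hQ'
  -- Case C : both hits are boundary vertices of P k
  exfalso
  obtain ⟨z, hzQ, hzk, hzu⟩ : ∃ z, z ∈ Q.walk.support ∧ z ∈ (P k).vertexSet ∧ z ≠ u := by
    rcases eq_or_ne x u with rfl | h
    · exact ⟨y, hyQ, hyk, fun hh => hxy hh.symm⟩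
    · exact ⟨x, hxQ, hxk, h⟩
  have h1 : Q.walk.support = w₁.support ++ w₂.support.tail := by
    rw [← happ, Walk.support_append]
  have h2 : Q.walk.support = a₂.support.tail.reverse ++ a₁.support.reverse := by
    have hrev : Q.walk.reverse.support = a₁.support ++ a₂.support.tail := by
      have : a₁.append a₂ = Q.walk.reverse := happr
      show Q.rev.walk.support = _
      rw [← happr, Walk.support_append]
    calc Q.walk.support = Q.walk.reverse.support.reverse := by
          rw [Walk.support_reverse, List.reverse_reverse]
      _ = (a₁.support ++ a₂.support.tail).reverse := by rw [hrev]
      _ = a₂.support.tail.reverse ++ a₁.support.reverse := List.reverse_append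
  have huv : u ≠ v := by
    rintro rfl
    have hu1 : u ∈ w₁.support := w₁.end_mem_support
    have hu2 : u ∈ a₁.support.reverse := List.mem_reverse.mpr a₁.end_mem_support
    have hz1 : z ∈ w₂.support.tail := by
      have := hzQ
      rw [h1, List.mem_append] at this
      rcases this with h | h
      · exact absurd (hfirstu z h hzk) hzu
      · exact h
    have hz2 : z ∈ a₂.support.tail.reverse := by
      have := hzQ
      rw [h2, List.mem_append] at this
      rcases this with h | h
      · exact h
      · rw [List.mem_reverse] at h
        exact absurd (hfirstv z h hzk) hzu
    exact aux_list_two_splits Q.isPath.support_nodup h1 h2 hu1 hu2 hz1 hz2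
  have hub : u ∈ (P k).boundary := by
    by_contra h
    exact huint ⟨huk, h⟩
  have hvb : v ∈ (P k).boundary := by
    by_contra h
    exact hvint ⟨hvk, h⟩
  simp only [InducedPath.boundary, Set.mem_insert_iff, Set.mem_singleton_iff] at hub hvb
  -- a walk S from u to v whose support is exactly the support of P k
  obtain ⟨S, hSpath, hSind, hSsupp⟩ : ∃ S : G.Walk u v, S.IsPath ∧ WalkInd G S ∧
      ∀ t ∈ (P k).walk.support, t ∈ S.support := by
    rcases hub with hu | hu <;> rcases hvb with hv | hv
    · exact absurd (hu.trans hv.symm) huv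
    · refine ⟨(P k).walk.copy hu.symm hv.symm, ?_, walkInd_copy _ _ (P k).induced, ?_⟩
      · rw [Walk.isPath_copy]; exact (P k).isPath
      · intro t ht; rw [Walk.support_copy]; exact ht
    · refine ⟨(P k).walk.reverse.copy hu.symm hv.symm, ?_,
        walkInd_copy _ _ (walkInd_reverse (P k).induced), ?_⟩
      · rw [Walk.isPath_copy]; exact (P k).isPath.reverse
      · intro t ht
        rw [Walk.support_copy, Walk.support_reverse, List.mem_reverse]; exact ht
    · exact absurd (hu.trans hv.symm) huv
  -- the middle segment of Q from u to v
  have hvQ : v ∈ Q.walk.support := by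
    have : v ∈ Q.walk.reverse.support := by
      show v ∈ Q.rev.walk.support
      rw [← happr, Walk.mem_support_append_iff]
      exact Or.inl a₁.end_mem_support
    rw [Walk.support_reverse, List.mem_reverse] at this
    exact this
  have hvw₂ : v ∈ w₂.support := by
    have := hvQ
    rw [← happ, Walk.mem_support_append_iff] at this
    rcases this with h | h
    · exact absurd (hfirstu v h hvk) (Ne.symm huv)
    · exact h
  have hQpath := Q.isPath
  have hQind : WalkInd G Q.walk := Q.induced
  rw [← happ] at hQpath hQind
  have hw₂path : w₂.IsPath := hQpath.of_append_right
  have hw₂ind : WalkInd G w₂ := walkInd_append_right hQpath hQind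
  have hspec := w₂.take_spec hvw₂
  have hRpath : (w₂.takeUntil v hvw₂).IsPath := hw₂path.takeUntil hvw₂
  have hRind : WalkInd G (w₂.takeUntil v hvw₂) := by
    rw [← hspec] at hw₂path hw₂ind
    exact walkInd_append_left hw₂path hw₂ind
  have hPsub := aux_unique_induced hBG (w₂.takeUntil v hvw₂).length u
    (w₂.takeUntil v hvw₂) rfl hRpath hRind S hSpath hSind
  -- P k is contained in Q : contradiction
  have hvsub : (P k).vertexSet ⊆ Q.vertexSet := by
    intro t ht
    have h3 : t ∈ (w₂.takeUntil v hvw₂).support := hPsub t (hSsupp t ht)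
    have h4 : t ∈ w₂.support := Walk.support_takeUntil_subset _ hvw₂ h3
    show t ∈ Q.walk.support
    rw [← happ, Walk.mem_support_append_iff]
    exact Or.inr h4
  refine hnc k ⟨hvsub, ?_⟩
  intro e he
  revert he
  induction e using Sym2.ind with | _ a b =>
  intro he
  exact Q.induced a (hvsub ((P k).walk.fst_mem_support_of_mem_edges he))
    b (hvsub ((P k).walk.snd_mem_support_of_mem_edges he)) ((P k).walk.adj_of_mem_edges he)

end AuxMain
/-- **Theorem (Statement 16).** If `P_ind` contains an internal strand, then it
contains an internal strand which is edge-disjoint from the family `P`. -/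
theorem blockGraph_internalStrand_edgeDisjoint {V : Type*} [Fintype V] [DecidableEq V]
    (G : SimpleGraph V) (hBG : IsBlockGraph G) (ℓ : ℕ) (P : Fin ℓ → InducedPath G)
    (hdisj : PairwiseVertexDisjoint G P)
    (h : ∃ i j Q, IsInternalStrand G P i j Q) :
    ∃ i j Q, IsInternalStrand G P i j Q ∧ Disjoint Q.edgeSet (famEdges G P) := by
  obtain ⟨i, j, Q, hQ⟩ := h
  exact aux_key_strand hBG hdisj Q.walk.length i j Q rfl hQ
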